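/- Let V be a finite set, let k, l ≥ 2, let F, F' ⊆ V, let w be a finite word over V and v ∈ V such that score_F(w) < k and score_{F'}(w) < l. If score_F(wv) = k and score_{F'}(wv) = l, then F = F'. -/

import Mathlib

/- Common definitions for finite-time Muller games, following
   McNaughton / Fearnley-Zimmermann. -/

universe u

variable {V : Type u}

/-- The occurrence set of a finite word: the set of letters occurring in it. -/
def occ (x : List V) : Set V := {v | v ∈ x}

/-- `score F w` is the maximal `k` such that some suffix of `w` decomposes as
`x₁ ⋯ x_k` with every `xᵢ` non-empty and `occ xᵢ = F` (with `max ∅ = 0`). -/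
noncomputable def score (F : Set V) (w : List V) : ℕ :=
  sSup {k | ∃ xs : List (List V), xs.length = k ∧
    (∀ x ∈ xs, x ≠ [] ∧ occ x = F) ∧ xs.flatten <:+ w}

/-- `maxscore 𝓕 w` is the maximum of `score F u` over `F ∈ 𝓕` and non-empty
prefixes `u` of `w`. -/
noncomputable def maxscore (𝓕 : Set (Set V)) (w : List V) : ℕ :=
  sSup {n | ∃ F ∈ 𝓕, ∃ u : List V, u ≠ [] ∧ u <+: w ∧ n = score F u}

/-- `AccGood F w x` : `x` is a suffix of `w` with `occ x ⊆ F` such that removing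
any suffix `y` of `x` from `w` does not change the score of `F`. -/
def AccGood (F : Set V) (w x : List V) : Prop :=
  x <:+ w ∧ occ x ⊆ F ∧
    ∀ y : List V, y <:+ x → score F (w.take (w.length - y.length)) = score F w

/-- The accumulator `acc F w` : the occurrence set of the longest suffix `x` of `w`
with `occ x ⊆ F` such that the score of `F` did not change during `x`. -/
noncomputable def acc (F : Set V) (w : List V) : Set V :=
  occ (w.drop (sInf {i | AccGood F w (w.drop i)}))

/-- A non-empty word `w` is an `𝓕`-burden if `maxscore 𝓕 w ≤ 2` and for every
`F ∈ 𝓕` either `score F w = 0`, or `score F w = 1` and `acc F w = ∅`. -/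
def Burden (𝓕 : Set (Set V)) (w : List V) : Prop :=
  w ≠ [] ∧ maxscore 𝓕 w ≤ 2 ∧
    ∀ F ∈ 𝓕, score F w = 0 ∨ (score F w = 1 ∧ acc F w = ∅)

/-- The maxscore of an infinite sequence: the supremum (in `ℕ∞`) of the scores of
sets `F ∈ 𝓕` over all non-empty finite prefixes. -/
noncomputable def maxscoreInf (𝓕 : Set (Set V)) (ρ : ℕ → V) : ℕ∞ :=
  ⨆ F ∈ 𝓕, ⨆ n : ℕ, (score F ((List.range (n + 1)).map ρ) : ℕ∞)

/-- The set of elements occurring infinitely often in the sequence `ρ`. -/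
def limitSet (ρ : ℕ → V) : Set V := {v | ∀ N : ℕ, ∃ n, N ≤ n ∧ ρ n = v}

/-- The indicator of a play: the union of all `F ∈ 𝓕` with positive score
together with all non-empty accumulators of members of `𝓕`. -/
noncomputable def ind (𝓕 : Set (Set V)) (w : List V) : Set V :=
  (⋃ F ∈ {F ∈ 𝓕 | 0 < score F w}, F) ∪ ⋃ F ∈ {F ∈ 𝓕 | acc F w ≠ ∅}, acc F w

/-- An arena: a finite directed graph together with the set `V0` of vertices of
Player 0 (Player 1 owns the complement), where every vertex has a successor. -/
structure Arena (V : Type u) where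
  V0 : Set V
  E : V → V → Prop
  exists_succ : ∀ v, ∃ u, E v u

/-- The positions of Player `i`. -/
def Arena.pos (G : Arena V) (i : Fin 2) : Set V :=
  if i = 0 then G.V0 else G.V0ᶜ

/-- A strategy maps a history (the play so far, excluding the current vertex)
and the current vertex to a successor vertex. -/
abbrev Strategy (V : Type u) := List V → V → V

/-- A strategy is legal if it always moves along edges. -/
def Arena.Legal (G : Arena V) (σ : Strategy V) : Prop :=
  ∀ w v, G.E v (σ w v)

/-- An infinite play in `G` starting in `v`. -/
def Arena.IsPlay (G : Arena V) (v : V) (ρ : ℕ → V) : Prop :=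
  ρ 0 = v ∧ ∀ n, G.E (ρ n) (ρ (n + 1))

/-- An infinite play is consistent with the strategy `σ` of Player `i`. -/
def Arena.ConsistentInf (G : Arena V) (i : Fin 2) (σ : Strategy V) (ρ : ℕ → V) : Prop :=
  ∀ n, ρ n ∈ G.pos i → ρ (n + 1) = σ ((List.range n).map ρ) (ρ n)

/-- Player `i` (with winning condition `𝓕i`) wins the Muller game from `v`. -/
def Arena.MullerWinFrom (G : Arena V) (i : Fin 2) (𝓕i : Set (Set V)) (v : V) : Prop :=
  ∃ σ : Strategy V, G.Legal σ ∧
    ∀ ρ : ℕ → V, G.IsPlay v ρ → G.ConsistentInf i σ ρ → limitSet ρ ∈ 𝓕i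

/-- The winning region of Player `i` in the Muller game. -/
def Arena.MullerWinRegion (G : Arena V) (i : Fin 2) (𝓕i : Set (Set V)) : Set V :=
  {v | G.MullerWinFrom i 𝓕i v}

/-- A finite play is consistent with the strategy `σ` of Player `i`. -/
def Arena.ConsistentFin (G : Arena V) (i : Fin 2) (σ : Strategy V) (w : List V) : Prop :=
  ∀ (u : List V) (v x : V), u ++ [v, x] <+: w → v ∈ G.pos i → x = σ u v

/-- A play of the finite-time Muller game with threshold `k`: a finite path
whose maxscore (over all subsets) is exactly `k`, while the maxscore of
its proper prefixes is `< k`. -/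
def FTPlay (G : Arena V) (k : ℕ) (w : List V) : Prop :=
  w.Chain' G.E ∧ maxscore (Set.univ : Set (Set V)) w = k ∧
    maxscore (Set.univ : Set (Set V)) w.dropLast < k

/-- Player `i` wins the finite-time Muller game with threshold `k` from `v`. -/
def FTWinFrom (G : Arena V) (i : Fin 2) (𝓕i : Set (Set V)) (k : ℕ) (v : V) : Prop :=
  ∃ σ : Strategy V, G.Legal σ ∧
    ∀ w : List V, FTPlay G k w → w.head? = some v → G.ConsistentFin i σ w →
      ∃ F ∈ 𝓕i, score F w = k

/-- The winning region of Player `i` in the finite-time Muller game. -/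
def FTWinRegion (G : Arena V) (i : Fin 2) (𝓕i : Set (Set V)) (k : ℕ) : Set V :=
  {v | FTWinFrom G i 𝓕i k v}

/-- A play of McNaughton's finite-time Muller game: a finite path such that some
set `F` reaches score `|F|! + 1`, while no set did so in a proper prefix. -/
def McNPlay (G : Arena V) (w : List V) : Prop :=
  w.Chain' G.E ∧ (∃ F : Set V, score F w = F.ncard.factorial + 1) ∧
    ∀ u : List V, u <+: w → u ≠ w →
      ∀ F : Set V, score F u ≠ F.ncard.factorial + 1

/-- Player `i` wins McNaughton's finite-time Muller game from `v`. -/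
def McNWinFrom (G : Arena V) (i : Fin 2) (𝓕i : Set (Set V)) (v : V) : Prop :=
  ∃ σ : Strategy V, G.Legal σ ∧
    ∀ w : List V, McNPlay G w → w.head? = some v → G.ConsistentFin i σ w →
      ∃ F ∈ 𝓕i, score F w = F.ncard.factorial + 1

/-- The winning region of Player `i` in McNaughton's finite-time Muller game. -/
def McNWinRegion (G : Arena V) (i : Fin 2) (𝓕i : Set (Set V)) : Set V :=
  {v | McNWinFrom G i 𝓕i v}

open Classical in
/-- The list `ρ₀ ⋯ ρₙ` of the first `n+1` vertices of the unique play that starts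
in `v` and is consistent with the strategy `σ` of Player `i` and the strategy `τ`
of the other player. -/
noncomputable def playList (G : Arena V) (i : Fin 2) (σ τ : Strategy V) (v : V) :
    ℕ → List V
  | 0 => [v]
  | n + 1 =>
      let w := playList G i σ τ v n
      let u := w.getLastD v
      w ++ [if u ∈ G.pos i then σ w.dropLast u else τ w.dropLast u]

/-- `playOf G i σ τ v` : the unique play starting in `v` that is consistent with
the strategy `σ` of Player `i` and the strategy `τ` of the other player. -/
noncomputable def playOf (G : Arena V) (i : Fin 2) (σ τ : Strategy V) (v : V)
    (n : ℕ) : V :=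
  (playList G i σ τ v n).getLastD v

section StmtSixAux

/-- The defining set of `score`. -/
def scoreSet (F : Set V) (w : List V) : Set ℕ :=
  {k | ∃ xs : List (List V), xs.length = k ∧
    (∀ x ∈ xs, x ≠ [] ∧ occ x = F) ∧ xs.flatten <:+ w}

lemma score_eq_sSup (F : Set V) (w : List V) : score F w = sSup (scoreSet F w) := rfl

lemma length_le_length_flatten (xs : List (List V)) (h : ∀ x ∈ xs, x ≠ []) :
    xs.length ≤ xs.flatten.length := by
  induction xs with
  | nil => simp
  | cons a t ih =>
    simp only [List.flatten_cons, List.length_append, List.length_cons]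
    have ha : a ≠ [] := h a (by simp)
    have h1 : 1 ≤ a.length := List.length_pos_iff.mpr ha
    have h2 := ih (fun x hx => h x (by simp [hx]))
    omega

lemma scoreSet_bddAbove (F : Set V) (w : List V) : BddAbove (scoreSet F w) := by
  refine ⟨w.length, ?_⟩
  rintro k ⟨xs, rfl, hb, hsuf⟩
  exact le_trans (length_le_length_flatten xs (fun x hx => (hb x hx).1)) hsuf.length_le

lemma scoreSet_nonempty (F : Set V) (w : List V) : (scoreSet F w).Nonempty :=
  ⟨0, [], rfl, by simp, by simp⟩

lemma score_mem (F : Set V) (w : List V) : score F w ∈ scoreSet F w :=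
  Nat.sSup_mem (scoreSet_nonempty F w) (scoreSet_bddAbove F w)

lemma le_score {F : Set V} {w : List V} {k : ℕ} (h : k ∈ scoreSet F w) : k ≤ score F w :=
  le_csSup (scoreSet_bddAbove F w) h

lemma suffix_of_suffix_length_le {l₁ l₂ l : List V} (h1 : l₁ <:+ l) (h2 : l₂ <:+ l)
    (h : l₁.length ≤ l₂.length) : l₁ <:+ l₂ := by
  rw [← List.reverse_prefix] at h1 h2 ⊢
  exact List.prefix_of_prefix_length_le h1 h2 (by simpa using h)

lemma isSuffix_dropLast {s t : List V} (h : s <:+ t) : s.dropLast <:+ t.dropLast := by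
  obtain ⟨r, rfl⟩ := h
  rcases eq_or_ne s [] with rfl | hs
  · simp
  · rw [List.dropLast_append_of_ne_nil hs]; exact ⟨r, rfl⟩

lemma mem_occ_iff {u : V} {x : List V} : u ∈ occ x ↔ u ∈ x := Iff.rfl

lemma occ_flatten_subset {xs : List (List V)} {F : Set V}
    (h : ∀ x ∈ xs, occ x = F) {u : V} (hu : u ∈ xs.flatten) : u ∈ F := by
  obtain ⟨x, hx, hux⟩ := List.mem_flatten.mp hu
  rw [← h x hx]; exact hux

/-- Key half of Statement 6: given `F ⊆ F'`, witnessing decompositions of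
scores `k ≥ 2` (for `F`) and `l` (for `F'`) in `w ++ [v]`, and
`score F' w < l`, we get `F' ⊆ F`. -/
lemma stmt6_half {F F' : Set V} {w : List V} {v : V} {k l : ℕ} (hk : 2 ≤ k)
    (hFF' : F ⊆ F')
    (hxs : k ∈ scoreSet F (w ++ [v])) (hys : l ∈ scoreSet F' (w ++ [v]))
    (h2 : score F' w < l) : F' ⊆ F := by
  obtain ⟨xs, hxlen, hxb, hxsuf⟩ := hxs
  obtain ⟨ys, hylen, hyb, hysuf⟩ := hys
  rcases xs.eq_nil_or_concat with rfl | ⟨p, a, rfl⟩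
  · simp at hxlen; omega
  rcases ys.eq_nil_or_concat with rfl | ⟨q, b, rfl⟩
  · simp at hylen; omega
  simp only [List.concat_eq_append] at hxlen hxb hxsuf hylen hyb hysuf
  obtain ⟨ha_ne, ha_occ⟩ := hxb a (by simp)
  obtain ⟨hb_ne, hb_occ⟩ := hyb b (by simp)
  have hp_ne : p ≠ [] := by
    intro h; subst h; simp at hxlen; omega
  set X : List V := (p ++ [a]).flatten with hX
  have hXeq : X = p.flatten ++ a := by simp [hX]
  have hX_ne : X ≠ [] := by
    rw [hXeq]; intro h
    exact ha_ne (List.append_eq_nil_iff.mp h).2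
  have hXsuf : X <:+ w ++ [v] := hxsuf
  have hbsuf : b <:+ w ++ [v] := by
    refine List.IsSuffix.trans ?_ hysuf
    simp only [List.flatten_append, List.flatten_cons, List.flatten_nil, List.append_nil]
    exact ⟨q.flatten, rfl⟩
  have hXocc : ∀ u ∈ X, u ∈ F := by
    intro u hu
    exact occ_flatten_subset (fun x hx => (hxb x hx).2) hu
  rcases le_or_gt b.length X.length with hle | hlt
  · -- b is a suffix of X, so F' = occ b ⊆ F
    have hbX : b <:+ X := suffix_of_suffix_length_le hbsuf hXsuf hle
    intro u hu
    rw [← hb_occ] at hu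
    exact hXocc u (hbX.subset hu)
  · -- X is a proper suffix of b; build an l-decomposition inside w
    exfalso
    have hXb : X <:+ b := suffix_of_suffix_length_le hXsuf hbsuf hlt.le
    obtain ⟨z, hz⟩ := hXb
    have hz_ne : z ≠ [] := by
      intro h; subst h; simp at hz; subst hz; omega
    have hXdrop : X.dropLast = p.flatten ++ a.dropLast := by
      rw [hXeq, List.dropLast_append_of_ne_nil ha_ne]
    -- the new last block
    set c : List V := z ++ X.dropLast with hc
    have hc_ne : c ≠ [] := by
      intro h; exact hz_ne (List.append_eq_nil_iff.mp h).1
    have hc_occ : occ c = F' := by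
      ext u
      simp only [mem_occ_iff, hc, List.mem_append]
      constructor
      · rintro (hu | hu)
        · rw [← hb_occ, mem_occ_iff, ← hz]
          exact List.mem_append.mpr (Or.inl hu)
        · rw [hXdrop, List.mem_append] at hu
          rcases hu with hu | hu
          · exact hFF' (hXocc u (by rw [hXeq]; exact List.mem_append.mpr (Or.inl hu)))
          · have : u ∈ a := (List.dropLast_sublist a).subset hu
            exact hFF' (by rw [← ha_occ]; exact this)
      · intro hu
        rw [← hb_occ, mem_occ_iff, ← hz, List.mem_append] at hu
        rcases hu with hu | hu
        · exact Or.inl hu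
        · -- u ∈ X, hence u ∈ F, hence u occurs in some block of p
          have huF : u ∈ F := hXocc u hu
          obtain ⟨x, hx⟩ := List.exists_mem_of_ne_nil p hp_ne
          have : u ∈ x := by rw [← mem_occ_iff, (hxb x (by simp [hx])).2]; exact huF
          refine Or.inr ?_
          rw [hXdrop, List.mem_append]
          exact Or.inl (List.mem_flatten.mpr ⟨x, hx, this⟩)
    have hflat : (q ++ [c]).flatten = (q.flatten ++ b).dropLast := by
      have : (q.flatten ++ b).dropLast = q.flatten ++ b.dropLast :=
        List.dropLast_append_of_ne_nil hb_ne
      rw [this, ← hz]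
      have : (z ++ X).dropLast = z ++ X.dropLast :=
        List.dropLast_append_of_ne_nil hX_ne
      simp [this, hc]
    have hsuf' : (q ++ [c]).flatten <:+ w := by
      rw [hflat]
      have := isSuffix_dropLast hysuf
      rwa [show (w ++ [v]).dropLast = w from List.dropLast_concat,
        show (q ++ [b]).flatten = q.flatten ++ b by simp] at this
    have hmem : l ∈ scoreSet F' w := by
      refine ⟨q ++ [c], ?_, ?_, hsuf'⟩
      · simp at hylen ⊢; omega
      · intro x hx
        rw [List.mem_append] at hx
        rcases hx with hx | hx
        · exact hyb x (by simp [hx])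
        · simp at hx; subst hx; exact ⟨hc_ne, hc_occ⟩
    exact absurd (le_score hmem) (not_le.mpr h2)

end StmtSixAux

/-- If two sets `F` and `F'` reach scores `k ≥ 2` and `l ≥ 2`,
respectively, for the first time with the same letter `v`, then `F = F'`. -/
theorem stmt_6 {V : Type u} [Fintype V] (k l : ℕ) (hk : 2 ≤ k) (hl : 2 ≤ l)
    (F F' : Set V) (w : List V) (v : V)
    (h1 : score F w < k) (h2 : score F' w < l)
    (h3 : score F (w ++ [v]) = k) (h4 : score F' (w ++ [v]) = l) :
    F = F' := by
  have hx := score_mem F (w ++ [v]); rw [h3] at hx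
  have hy := score_mem F' (w ++ [v]); rw [h4] at hy
  -- extract the last blocks to compare them
  obtain ⟨xs, hxlen, hxb, hxsuf⟩ := hx
  obtain ⟨ys, hylen, hyb, hysuf⟩ := hy
  rcases xs.eq_nil_or_concat with rfl | ⟨p, a, rfl⟩
  · simp at hxlen; omega
  rcases ys.eq_nil_or_concat with rfl | ⟨q, b, rfl⟩
  · simp at hylen; omega
  simp only [List.concat_eq_append] at hxlen hxb hxsuf hylen hyb hysuf
  obtain ⟨ha_ne, ha_occ⟩ := hxb a (by simp)
  obtain ⟨hb_ne, hb_occ⟩ := hyb b (by simp)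
  have hasuf : a <:+ w ++ [v] := by
    refine List.IsSuffix.trans ?_ hxsuf
    simp only [List.flatten_append, List.flatten_cons, List.flatten_nil, List.append_nil]
    exact ⟨p.flatten, rfl⟩
  have hbsuf : b <:+ w ++ [v] := by
    refine List.IsSuffix.trans ?_ hysuf
    simp only [List.flatten_append, List.flatten_cons, List.flatten_nil, List.append_nil]
    exact ⟨q.flatten, rfl⟩
  have hxmem : k ∈ scoreSet F (w ++ [v]) :=
    ⟨p ++ [a], hxlen, hxb, hxsuf⟩
  have hymem : l ∈ scoreSet F' (w ++ [v]) :=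
    ⟨q ++ [b], hylen, hyb, hysuf⟩
  rcases le_total a.length b.length with hab | hba
  · have hFF' : F ⊆ F' := by
      have h := suffix_of_suffix_length_le hasuf hbsuf hab
      rw [← ha_occ, ← hb_occ]
      exact fun u hu => h.subset hu
    exact le_antisymm hFF' (stmt6_half hk hFF' hxmem hymem h2)
  · have hF'F : F' ⊆ F := by
      have h := suffix_of_suffix_length_le hbsuf hasuf hba
      rw [← ha_occ, ← hb_occ]
      exact fun u hu => h.subset hu
    exact le_antisymm (stmt6_half hl hF'F hymem hxmem h1) hF'F
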